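/- Let (X,d) be a uniformly discrete metric space (i.e., inf{d(x,y) : x ≠ y} > 0) on which a group G acts translation-like. Define d_{X/G} on the orbit set X/G by d_{X/G}([x],[y]) = inf over chains {(xᵢ,yᵢ)}_{i=1}^k (with x₁ = x, y_k = y, and for each i < k some gᵢ ∈ G with gᵢ·yᵢ = x_{i+1}) of Σᵢ d(xᵢ,yᵢ). Then d_{X/G} is a metric on X/G. -/

import Mathlib

/-- A translation-like (right) action of a group `K` on a metric space `X`. -/
def RightTranslationLike {K X : Type*} [Group K] [MetricSpace X]
    (α : K → X → X) : Prop :=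
  (∀ x, α 1 x = x) ∧ (∀ k₁ k₂ x, α (k₁ * k₂) x = α k₂ (α k₁ x)) ∧
  (∀ k x, α k x = x → k = 1) ∧ ∀ k, ∃ C : ℝ, ∀ x, dist x (α k x) ≤ C

/-- A chain from `x` to `y` relative to the action `α`: a nonempty finite list of
pairs `(xᵢ,yᵢ)` with `x₁ = x`, `y_k = y`, and for each `i < k` some `g ∈ K` with
`α g yᵢ = x_{i+1}`. -/
def IsChainFrom {K X : Type*} (α : K → X → X) (x y : X)
    (l : List (X × X)) : Prop :=
  (l.map Prod.fst).head? = some x ∧ (l.map Prod.snd).getLast? = some y ∧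
  l.Chain' (fun p q => ∃ k : K, α k p.2 = q.1)

/-- The chain distance `d_{X/G}`: infimum over chains of the sum of the
distances within each pair. -/
noncomputable def chainDist {K X : Type*} [MetricSpace X] (α : K → X → X)
    (x y : X) : ℝ :=
  sInf {s : ℝ | ∃ l : List (X × X), IsChainFrom α x y l ∧
    s = (l.map fun p => dist p.1 p.2).sum}

section Helpers

variable {G X : Type*} [Group G] [MetricSpace X]

private lemma chainSet_nonempty (α : G → X → X) (x y : X) :
    Set.Nonempty {s : ℝ | ∃ l : List (X × X), IsChainFrom α x y l ∧
      s = (l.map fun p => dist p.1 p.2).sum} := by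
  refine ⟨dist x y, [(x, y)], ⟨by simp, by simp, List.isChain_singleton _⟩, by simp⟩

private lemma chainSet_bddBelow (α : G → X → X) (x y : X) :
    BddBelow {s : ℝ | ∃ l : List (X × X), IsChainFrom α x y l ∧
      s = (l.map fun p => dist p.1 p.2).sum} := by
  refine ⟨0, fun s hs => ?_⟩
  obtain ⟨l, -, rfl⟩ := hs
  refine List.sum_nonneg ?_
  simp only [List.mem_map]
  rintro a ⟨p, -, rfl⟩
  exact dist_nonneg

private lemma chain_ne_nil {α : G → X → X} {x y : X} {l : List (X × X)}
    (h : IsChainFrom α x y l) : l ≠ [] := by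
  rintro rfl
  simp [IsChainFrom] at h

/-- A chain all of whose pairs are diagonal connects points in the same orbit. -/
private lemma orbit_of_diag {α : G → X → X} (hα : RightTranslationLike α) :
    ∀ (l : List (X × X)) (x y : X), IsChainFrom α x y l →
      (∀ p ∈ l, p.1 = p.2) → ∃ g : G, α g x = y := by
  intro l
  induction l with
  | nil => intro x y h; exact absurd rfl (chain_ne_nil h)
  | cons p t ih =>
    intro x y h hd
    obtain ⟨h1, h2, h3⟩ := h
    simp only [List.map_cons, List.head?_cons, Option.some.injEq] at h1
    have hp : p.1 = p.2 := hd p (by simp)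
    cases t with
    | nil =>
      simp only [List.map_cons, List.map_nil, List.getLast?_singleton,
        Option.some.injEq] at h2
      exact ⟨1, by rw [hα.1, ← h1, hp, h2]⟩
    | cons q t' =>
      have h2' : ((q :: t').map Prod.snd).getLast? = some y := by
        simpa using h2
      obtain ⟨⟨k, hk⟩, h3'⟩ := List.isChain_cons_cons.mp h3
      obtain ⟨g, hg⟩ := ih q.1 y ⟨by simp, h2', h3'⟩ (fun r hr => hd r (by simp [hr]))
      refine ⟨k * g, ?_⟩
      rw [hα.2.1, ← h1, hp, hk, hg]

private lemma isChainFrom_reverse {α : G → X → X} (hα : RightTranslationLike α)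
    {x y : X} {l : List (X × X)} (h : IsChainFrom α x y l) :
    IsChainFrom α y x ((l.map Prod.swap).reverse) := by
  obtain ⟨h1, h2, h3⟩ := h
  refine ⟨?_, ?_, ?_⟩
  · rw [show ((l.map Prod.swap).reverse).map Prod.fst
        = ((l.map Prod.snd)).reverse by
      simp [List.map_reverse, Function.comp]]
    rwa [List.head?_reverse]
  · rw [show ((l.map Prod.swap).reverse).map Prod.snd
        = ((l.map Prod.fst)).reverse by
      simp [List.map_reverse, Function.comp]]
    rwa [List.getLast?_reverse]
  · show List.IsChain _ _
    rw [List.isChain_reverse, List.isChain_map]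
    refine List.IsChain.imp ?_ h3
    rintro p q ⟨k, hk⟩
    refine ⟨k⁻¹, ?_⟩
    simp only [Prod.snd_swap, Prod.fst_swap]
    rw [← hk, ← hα.2.1, mul_inv_cancel, hα.1]

private lemma reverse_sum {l : List (X × X)} :
    (((l.map Prod.swap).reverse).map fun p => dist p.1 p.2).sum
      = (l.map fun p => dist p.1 p.2).sum := by
  rw [List.map_reverse, List.sum_reverse, List.map_map]
  congr 1
  refine List.map_congr_left fun p _ => ?_
  simp [Function.comp, dist_comm]

private lemma isChainFrom_append {α : G → X → X} (hα : RightTranslationLike α)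
    {x y z : X} {l₁ l₂ : List (X × X)} (h₁ : IsChainFrom α x y l₁)
    (h₂ : IsChainFrom α y z l₂) : IsChainFrom α x z (l₁ ++ l₂) := by
  obtain ⟨h11, h12, h13⟩ := h₁
  obtain ⟨h21, h22, h23⟩ := h₂
  have hne₁ : l₁ ≠ [] := by rintro rfl; simp at h11
  have hne₂ : l₂ ≠ [] := by rintro rfl; simp at h21
  refine ⟨?_, ?_, ?_⟩
  · rw [List.map_append, List.head?_append_of_ne_nil _ (by simpa using hne₁)]
    exact h11
  · rw [List.map_append, List.getLast?_append_of_ne_nil _ (by simpa using hne₂)]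
    exact h22
  · show List.IsChain _ _
    rw [List.isChain_append]
    refine ⟨h13, h23, ?_⟩
    intro a ha b hb
    have ha' : a.2 = y := by
      have h := h12
      rw [List.getLast?_map, Option.mem_def.mp ha] at h
      simpa using h
    have hb' : b.1 = y := by
      have h := h21
      rw [List.head?_map, Option.mem_def.mp hb] at h
      simpa using h
    exact ⟨1, by rw [hα.1, ha', hb']⟩

end Helpers

/-- For a uniformly discrete metric space `X` with a
translation-like action of `G`, the chain distance is a metric on the orbit
space `X/G`: it is symmetric, satisfies the triangle inequality, vanishes
exactly on pairs of points in the same orbit, and is positive on distinct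
orbits. -/
theorem chainDist_is_metric_on_quotient
    {G X : Type*} [Group G] [MetricSpace X]
    (hud : ∃ ε > (0 : ℝ), ∀ x y : X, x ≠ y → ε ≤ dist x y)
    (α : G → X → X) (hα : RightTranslationLike α) :
    (∀ x y : X, chainDist α x y = chainDist α y x) ∧
    (∀ x y z : X, chainDist α x z ≤ chainDist α x y + chainDist α y z) ∧
    (∀ x y : X, (∃ g, α g x = y) → chainDist α x y = 0) ∧
    (∀ x y : X, ¬ (∃ g, α g x = y) → 0 < chainDist α x y) := by
  have hsymm : ∀ x y : X, chainDist α x y = chainDist α y x := by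
    have key : ∀ x y : X,
        {s : ℝ | ∃ l : List (X × X), IsChainFrom α x y l ∧
          s = (l.map fun p => dist p.1 p.2).sum} ⊆
        {s : ℝ | ∃ l : List (X × X), IsChainFrom α y x l ∧
          s = (l.map fun p => dist p.1 p.2).sum} := by
      rintro x y s ⟨l, hl, rfl⟩
      exact ⟨(l.map Prod.swap).reverse, isChainFrom_reverse hα hl,
        (reverse_sum).symm⟩
    intro x y
    unfold chainDist
    exact le_antisymm
      (csInf_le_csInf (chainSet_bddBelow α x y) (chainSet_nonempty α y x) (key y x))
      (csInf_le_csInf (chainSet_bddBelow α y x) (chainSet_nonempty α x y) (key x y))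
  refine ⟨hsymm, ?_, ?_, ?_⟩
  · -- triangle inequality
    intro x y z
    have key : ∀ a ∈ {s : ℝ | ∃ l : List (X × X), IsChainFrom α x y l ∧
          s = (l.map fun p => dist p.1 p.2).sum},
        ∀ b ∈ {s : ℝ | ∃ l : List (X × X), IsChainFrom α y z l ∧
          s = (l.map fun p => dist p.1 p.2).sum},
        chainDist α x z ≤ a + b := by
      rintro a ⟨l₁, hl₁, rfl⟩ b ⟨l₂, hl₂, rfl⟩
      refine csInf_le (chainSet_bddBelow α x z)
        ⟨l₁ ++ l₂, isChainFrom_append hα hl₁ hl₂, ?_⟩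
      rw [List.map_append, List.sum_append]
    have step : ∀ b ∈ {s : ℝ | ∃ l : List (X × X), IsChainFrom α y z l ∧
          s = (l.map fun p => dist p.1 p.2).sum},
        chainDist α x z - b ≤ chainDist α x y := by
      intro b hb
      refine le_csInf (chainSet_nonempty α x y) fun a ha => ?_
      linarith [key a ha b hb]
    have : chainDist α x z - chainDist α x y ≤ chainDist α y z := by
      refine le_csInf (chainSet_nonempty α y z) fun b hb => ?_
      linarith [step b hb]
    linarith
  · -- same orbit implies zero
    rintro x y ⟨g, hg⟩
    have h0 : (0 : ℝ) ∈ {s : ℝ | ∃ l : List (X × X), IsChainFrom α x y l ∧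
        s = (l.map fun p => dist p.1 p.2).sum} :=
      ⟨[(x, x), (y, y)], ⟨by simp, by simp, List.isChain_cons_cons.mpr ⟨⟨g, hg⟩, List.isChain_singleton _⟩⟩, by simp⟩
    have hle : chainDist α x y ≤ 0 := csInf_le (chainSet_bddBelow α x y) h0
    have hge : (0 : ℝ) ≤ chainDist α x y := by
      refine le_csInf (chainSet_nonempty α x y) fun s hs => ?_
      obtain ⟨l, -, rfl⟩ := hs
      refine List.sum_nonneg ?_
      simp only [List.mem_map]
      rintro a ⟨p, -, rfl⟩
      exact dist_nonneg
    linarith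
  · -- distinct orbits implies positive
    intro x y hxy
    obtain ⟨ε, hε, hud⟩ := hud
    have : ε ≤ chainDist α x y := by
      refine le_csInf (chainSet_nonempty α x y) fun s hs => ?_
      obtain ⟨l, hl, rfl⟩ := hs
      by_contra hlt
      push_neg at hlt
      have hdiag : ∀ p ∈ l, p.1 = p.2 := by
        intro p hp
        by_contra hne
        have h1 : ε ≤ dist p.1 p.2 := hud _ _ hne
        have h2 : dist p.1 p.2 ≤ (l.map fun p => dist p.1 p.2).sum := by
          refine List.single_le_sum ?_ _ (List.mem_map_of_mem (f := fun p : X × X => dist p.1 p.2) hp)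
          simp only [List.mem_map]
          rintro a ⟨q, -, rfl⟩
          exact dist_nonneg
        linarith
      exact hxy (orbit_of_diag hα l x y hl hdiag)
    linarith
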